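/- Let b : [0,∞) → ℝ be continuous with b(t) ≥ 0 for all t, and suppose there exist c < 1 and t₀ ≥ 0 such that t·b(t) ≤ c for all t ≥ t₀. Define λ(t) = exp((1/2)∫₀ᵗ b(τ)dτ). Then there exist constants C₁, C₂ > 0 such that C₁ · t/λ(t)² ≤ ∫₀ᵗ λ(τ)⁻² dτ ≤ C₂ · (1 + t/λ(t)²) for all t ≥ 0. -/

import Mathlib

open MeasureTheory intervalIntegral

theorem stmt0 (b : ℝ → ℝ) (hb_cont : Continuous b)
    (hb_nonneg : ∀ t, 0 ≤ t → 0 ≤ b t)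
    (c t₀ : ℝ) (hc : c < 1) (ht₀ : 0 ≤ t₀)
    (hbc : ∀ t, t₀ ≤ t → t * b t ≤ c)
    (lam : ℝ → ℝ)
    (hlam : ∀ t, lam t = Real.exp ((1/2) * ∫ τ in (0:ℝ)..t, b τ)) :
    ∃ C₁ C₂ : ℝ, 0 < C₁ ∧ 0 < C₂ ∧ ∀ t, 0 ≤ t →
      C₁ * (t / (lam t)^2) ≤ (∫ τ in (0:ℝ)..t, ((lam τ)^2)⁻¹) ∧
      (∫ τ in (0:ℝ)..t, ((lam τ)^2)⁻¹) ≤ C₂ * (1 + t / (lam t)^2) := by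
  -- the primitive of b
  set B : ℝ → ℝ := fun t => ∫ τ in (0:ℝ)..t, b τ with hBdef
  have hBderiv : ∀ t, HasDerivAt B (b t) t := fun t =>
    intervalIntegral.integral_hasDerivAt_right (hb_cont.intervalIntegrable _ _)
      (hb_cont.stronglyMeasurableAtFilter _ _) hb_cont.continuousAt
  have hBcont : Continuous B := continuous_iff_continuousAt.2 fun t => (hBderiv t).continuousAt
  have hB0 : B 0 = 0 := intervalIntegral.integral_same
  have hBmono : ∀ s t : ℝ, 0 ≤ s → s ≤ t → B s ≤ B t := by
    intro s t hs hst
    have h1 : B s + ∫ τ in s..t, b τ = B t :=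
      intervalIntegral.integral_add_adjacent_intervals
        (hb_cont.intervalIntegrable 0 s) (hb_cont.intervalIntegrable s t)
    have h2 : 0 ≤ ∫ τ in s..t, b τ :=
      intervalIntegral.integral_nonneg hst fun x hx => hb_nonneg x (hs.trans hx.1)
    linarith
  have hBnonneg : ∀ t, 0 ≤ t → 0 ≤ B t := fun t ht => hB0 ▸ hBmono 0 t le_rfl ht
  have hlam2 : ∀ t, ((lam t)^2)⁻¹ = Real.exp (-(B t)) := by
    intro t
    rw [hlam t, sq, ← Real.exp_add, ← Real.exp_neg]
    congr 1
    ring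
  -- the integrand
  set f : ℝ → ℝ := fun τ => Real.exp (-(B τ)) with hfdef
  have hfcont : Continuous f := Real.continuous_exp.comp hBcont.neg
  have hfpos : ∀ τ, 0 < f τ := fun τ => Real.exp_pos _
  have hfle1 : ∀ τ, 0 ≤ τ → f τ ≤ 1 := fun τ hτ =>
    Real.exp_le_one_iff.2 (neg_nonpos.2 (hBnonneg τ hτ))
  have hIeq : ∀ t, (∫ τ in (0:ℝ)..t, ((lam τ)^2)⁻¹) = ∫ τ in (0:ℝ)..t, f τ := by
    intro t
    apply intervalIntegral.integral_congr
    intro x _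
    exact hlam2 x
  have h1c : 0 < 1 - c := by linarith
  refine ⟨1, t₀ + 1/(1-c), one_pos, by positivity, ?_⟩
  intro t ht
  have hdiv : t / (lam t)^2 = t * f t := by
    rw [div_eq_mul_inv, hlam2 t]
  constructor
  · -- lower bound
    rw [hIeq, hdiv, one_mul]
    have : ∫ τ in (0:ℝ)..t, f t ≤ ∫ τ in (0:ℝ)..t, f τ := by
      apply intervalIntegral.integral_mono_on ht intervalIntegrable_const
        (hfcont.intervalIntegrable _ _)
      intro x hx
      exact Real.exp_le_exp.2 (neg_le_neg (hBmono x t hx.1 hx.2))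
    simpa [mul_comm] using this
  · -- upper bound
    rw [hIeq, hdiv]
    have hft : 0 ≤ t * f t := mul_nonneg ht (hfpos t).le
    rcases le_or_gt t t₀ with htle | htgt
    · -- small t
      have h1 : (∫ τ in (0:ℝ)..t, f τ) ≤ ∫ τ in (0:ℝ)..t, (1:ℝ) := by
        apply intervalIntegral.integral_mono_on ht (hfcont.intervalIntegrable _ _)
          intervalIntegrable_const
        intro x hx
        exact hfle1 x hx.1
      have h2 : (∫ τ in (0:ℝ)..t, (1:ℝ)) = t := by simp
      have hC : 0 ≤ 1/(1-c) := by positivity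
      nlinarith [hft]
    · -- large t
      have ht₀t : t₀ ≤ t := htgt.le
      -- split the integral
      have hsplit : (∫ τ in (0:ℝ)..t₀, f τ) + (∫ τ in t₀..t, f τ) = ∫ τ in (0:ℝ)..t, f τ :=
        intervalIntegral.integral_add_adjacent_intervals
          (hfcont.intervalIntegrable _ _) (hfcont.intervalIntegrable _ _)
      have hpart1 : (∫ τ in (0:ℝ)..t₀, f τ) ≤ t₀ := by
        have h1 : (∫ τ in (0:ℝ)..t₀, f τ) ≤ ∫ τ in (0:ℝ)..t₀, (1:ℝ) := by
          apply intervalIntegral.integral_mono_on ht₀ (hfcont.intervalIntegrable _ _)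
            intervalIntegrable_const
          intro x hx
          exact hfle1 x hx.1
        simpa using h1
      -- the function g τ = τ * f τ
      have hgderiv : ∀ τ, HasDerivAt (fun s => s * f s) (f τ * (1 - τ * b τ)) τ := by
        intro τ
        have h1 : HasDerivAt (fun s => s * f s) (1 * f τ + τ * (f τ * (-(b τ)))) τ :=
          (hasDerivAt_id τ).mul (((hBderiv τ).neg).exp)
        convert h1 using 1
        ring
      have hg'cont : Continuous fun τ => f τ * (1 - τ * b τ) :=
        hfcont.mul (continuous_const.sub (continuous_id.mul hb_cont))
      have hFTC : (∫ τ in t₀..t, f τ * (1 - τ * b τ)) = t * f t - t₀ * f t₀ :=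
        intervalIntegral.integral_eq_sub_of_hasDerivAt
          (fun τ _ => hgderiv τ) (hg'cont.intervalIntegrable _ _)
      have hmono2 : (∫ τ in t₀..t, f τ * (1 - c)) ≤ ∫ τ in t₀..t, f τ * (1 - τ * b τ) := by
        apply intervalIntegral.integral_mono_on ht₀t
          ((hfcont.mul continuous_const).intervalIntegrable _ _)
          (hg'cont.intervalIntegrable _ _)
        intro x hx
        have := hbc x hx.1
        have := (hfpos x).le
        show f x * (1 - c) ≤ f x * (1 - x * b x)
        nlinarith
      have hconst : (∫ τ in t₀..t, f τ * (1 - c)) = (1 - c) * ∫ τ in t₀..t, f τ := by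
        simp [mul_comm, intervalIntegral.integral_mul_const]
      have hpart2 : (1 - c) * (∫ τ in t₀..t, f τ) ≤ t * f t := by
        have hg0 : 0 ≤ t₀ * f t₀ := mul_nonneg ht₀ (hfpos t₀).le
        rw [← hconst]
        calc (∫ τ in t₀..t, f τ * (1 - c)) ≤ t * f t - t₀ * f t₀ := hFTC ▸ hmono2
          _ ≤ t * f t := by linarith
      have hpart2' : (∫ τ in t₀..t, f τ) ≤ (1/(1-c)) * (t * f t) := by
        rw [← sub_nonneg] at hpart2 ⊢
        have h1 : (1/(1-c)) * (t * f t) - (∫ τ in t₀..t, f τ)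
            = (1/(1-c)) * (t * f t - (1-c) * ∫ τ in t₀..t, f τ) := by
          field_simp
        rw [h1]
        positivity
      have hC : 0 ≤ 1/(1-c) := by positivity
      nlinarith [hpart1, hpart2', hsplit, hft]
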